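/- Suppose S = ⟨a₁,...,a_r⟩ with a₁ < F(S) < a₂. Then F(S⁽ⁿ⁾) < n·a₂ for every n ≥ 1, F(S⁽ⁿ⁺¹⁾) = F(S⁽ⁿ⁾) + a₁ for every n ≥ 1, and consequently S⁽ⁿ⁺¹⁾ \ {0} = (S⁽ⁿ⁾ \ {0}) + a₁ and |S⁽ⁿ⁾ \ S⁽ⁿ⁺¹⁾| = a₁ for all n ≥ 1; the regularity index equals 1. -/

import Mathlib

def Sn {r : ℕ} (a : Fin r → ℕ) (n : ℕ) : Set ℕ :=
  {0} ∪ {s | ∃ α : Fin r → ℕ, n ≤ ∑ i, α i ∧ s = ∑ i, a i * α i}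

namespace SnAux

variable {r : ℕ}

lemma mem_Sn_iff {a : Fin r → ℕ} {n s : ℕ} :
    s ∈ Sn a n ↔ s = 0 ∨ ∃ α : Fin r → ℕ, n ≤ ∑ i, α i ∧ s = ∑ i, a i * α i := by
  simp [Sn]

lemma zero_mem {a : Fin r → ℕ} {n : ℕ} : (0:ℕ) ∈ Sn a n := Or.inl rfl

lemma sum_single (α : Fin (r+2) → ℕ) :
    ∑ i, ((α + Pi.single 0 1 : Fin (r+2) → ℕ)) i = (∑ i, α i) + 1 := by
  simp [Finset.sum_add_distrib]

lemma sum_mul_single (a α : Fin (r+2) → ℕ) :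
    ∑ i, a i * ((α + Pi.single 0 1 : Fin (r+2) → ℕ)) i = (∑ i, a i * α i) + a 0 := by
  simp only [Pi.add_apply, mul_add, Finset.sum_add_distrib]
  congr 1
  rw [Finset.sum_eq_single 0]
  · simp
  · intro b _ hb; simp [Pi.single_apply, hb]
  · simp

lemma eq_update_add (α : Fin (r+2) → ℕ) (h : α 0 ≠ 0) :
    α = Function.update α 0 (α 0 - 1) + Pi.single 0 1 := by
  funext i
  by_cases hi : i = 0
  · subst hi; simp [Function.update_self]; omega
  · simp [Function.update_of_ne hi, Pi.single_apply, hi]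

lemma lower_bound (a : Fin (r+2) → ℕ) (ha : StrictMono a) (α : Fin (r+2) → ℕ) (h0 : α 0 = 0) :
    a 1 * ∑ i, α i ≤ ∑ i, a i * α i := by
  rw [Finset.mul_sum]
  refine Finset.sum_le_sum fun i _ => ?_
  rcases Nat.eq_zero_or_pos (α i) with h | h
  · simp [h]
  · have hi : i ≠ 0 := by rintro rfl; omega
    have h1i : (1 : Fin (r+2)) ≤ i := by
      have := Fin.pos_of_ne_zero hi
      rw [Fin.le_def, Fin.val_one]
      rw [Fin.lt_def] at this
      exact Nat.pos_of_ne_zero (fun h => hi (Fin.ext h))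
    exact Nat.mul_le_mul_right _ (ha.monotone h1i)


lemma step_mem {a : Fin (r+2) → ℕ} {n s : ℕ} (hs : s ∈ Sn a n) (hs0 : s ≠ 0) :
    s + a 0 ∈ Sn a (n+1) := by
  rcases mem_Sn_iff.mp hs with rfl | ⟨α, hα, rfl⟩
  · exact absurd rfl hs0
  · exact Or.inr ⟨α + Pi.single 0 1, by rw [sum_single]; omega, (sum_mul_single a α).symm⟩

lemma pos_of_rep {a : Fin (r+2) → ℕ} (h1 : 1 < a 0) (ha : StrictMono a)
    {γ : Fin (r+2) → ℕ} (hγ : 1 ≤ ∑ i, γ i) : 0 < ∑ i, a i * γ i := by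
  by_contra h
  push_neg at h
  interval_cases hs : (∑ i, a i * γ i)
  rw [Finset.sum_eq_zero_iff] at hs
  have : ∀ i, γ i = 0 := by
    intro i
    have h0i : 0 < a i := lt_of_lt_of_le (by omega) (ha.monotone (Fin.zero_le i))
    have := hs i (Finset.mem_univ i)
    rcases Nat.mul_eq_zero.mp this with h | h
    · omega
    · exact h
  simp [Finset.sum_congr rfl fun i _ => this i] at hγ

lemma decompose {a : Fin (r+2) → ℕ} (h1 : 1 < a 0) (ha : StrictMono a) {n s : ℕ}
    (hs : s ∈ Sn a (n+1)) (hs0 : s ≠ 0) :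
    (∃ t, t ∈ Sn a n ∧ s = t + a 0 ∧ (1 ≤ n → t ≠ 0)) ∨ a 1 * (n+1) ≤ s := by
  rcases mem_Sn_iff.mp hs with rfl | ⟨α, hα, rfl⟩
  · exact absurd rfl hs0
  · by_cases h0 : α 0 = 0
    · exact Or.inr (le_trans (Nat.mul_le_mul_left _ hα) (lower_bound a ha α h0))
    · left
      set γ := Function.update α 0 (α 0 - 1) with hγdef
      have hαeq : α = γ + Pi.single 0 1 := eq_update_add α h0
      have hsum : ∑ i, α i = (∑ i, γ i) + 1 := by rw [hαeq]; exact sum_single γ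
      have hval : ∑ i, a i * α i = (∑ i, a i * γ i) + a 0 := by
        rw [hαeq]; exact sum_mul_single a γ
      refine ⟨∑ i, a i * γ i, Or.inr ⟨γ, by omega, rfl⟩, hval, fun hn => ?_⟩
      have := pos_of_rep h1 ha (γ := γ) (by omega)
      omega


lemma above {a : Fin (r+2) → ℕ} {F : ℕ} (h1 : 1 < a 0) (hF1 : a 0 < F)
    (hub : ∀ m, m ∉ Sn a 1 → m ≤ F) :
    ∀ n m, F + n * a 0 < m → m ∈ Sn a (n+1) := by
  intro n
  induction n with
  | zero =>
    intro m hm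
    by_contra h
    have := hub m h
    omega
  | succ n ih =>
    intro m hm
    have hm0 : a 0 < m := by nlinarith
    obtain ⟨t, rfl⟩ : ∃ t, m = t + a 0 := ⟨m - a 0, by omega⟩
    have ht : t ∈ Sn a (n+1) := ih t (by nlinarith)
    exact step_mem ht (by nlinarith)

lemma notmem {a : Fin (r+2) → ℕ} {F : ℕ} (h1 : 1 < a 0) (ha : StrictMono a)
    (hF1 : a 0 < F) (hF2 : F < a 1) (hnot : F ∉ Sn a 1) :
    ∀ n, F + n * a 0 ∉ Sn a (n+1) := by
  have ha01 : a 0 < a 1 := ha (by rw [Fin.lt_def, Fin.val_one]; simp)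
  intro n
  induction n with
  | zero => simpa using hnot
  | succ n ih =>
    intro hmem
    rcases decompose h1 ha hmem (by omega) with ⟨t, ht, heq, _⟩ | hge
    · have hexp : (n+1) * a 0 = n * a 0 + a 0 := by ring
      have : t = F + n * a 0 := by omega
      exact ih (this ▸ ht)
    · nlinarith


lemma iterate_mem {T : Set ℕ} {d : ℕ} (hclosed : ∀ t ∈ T, t + d ∈ T) {t : ℕ} (ht : t ∈ T) :
    ∀ c, t + c * d ∈ T := by
  intro c
  induction c with
  | zero => simpa using ht
  | succ c ih =>
    have := hclosed _ ih
    rw [show t + (c+1)*d = t + c*d + d by ring]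
    exact this

lemma apery_ncard {T : Set ℕ} {d B : ℕ} (hd : 0 < d)
    (hclosed : ∀ t ∈ T, t + d ∈ T)
    (hcofin : ∀ m, B < m → m ∈ T) :
    (T \ ((· + d) '' T)).ncard = d := by
  classical
  set D := T \ ((· + d) '' T) with hD
  have key : ∀ s ∈ D, ∀ s' ∈ D, s < s' → s % d = s' % d → False := by
    intro s hs s' hs' hlt h
    have hdvd : d ∣ s' - s := (Nat.modEq_iff_dvd' hlt.le).mp h
    obtain ⟨c, hc⟩ := hdvd
    have hc1 : 1 ≤ c := by
      rcases Nat.eq_zero_or_pos c with rfl | h'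
      · omega
      · exact h'
    rw [Nat.mul_comm] at hc
    refine hs'.2 ⟨s + (c-1)*d, iterate_mem hclosed hs.1 (c-1), ?_⟩
    have : (c-1)*d + d = c * d := by
      have : c - 1 + 1 = c := by omega
      calc (c-1)*d + d = (c-1+1)*d := by ring
      _ = c * d := by rw [this]
    simp only []
    omega
  have hinj : Set.InjOn (· % d) D := by
    intro s hs s' hs' h
    rcases lt_trichotomy s s' with hlt | heq | hlt
    · exact absurd (key s hs s' hs' hlt h) not_false
    · exact heq
    · exact absurd (key s' hs' s hs hlt h.symm) not_false
  have hsurj : Set.Iio d ⊆ (· % d) '' D := by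
    intro j hj
    have hj' : j < d := hj
    have hex : ∃ m, m ∈ T ∧ m % d = j := by
      refine ⟨j + (B+1)*d, hcofin _ ?_, ?_⟩
      · have : B + 1 ≤ (B+1)*d := Nat.le_mul_of_pos_right _ hd
        omega
      · rw [Nat.add_mul_mod_self_right, Nat.mod_eq_of_lt hj']
    let m := Nat.find hex
    have hm := Nat.find_spec hex
    refine ⟨m, ⟨hm.1, ?_⟩, hm.2⟩
    rintro ⟨t, ht, hteq⟩
    simp only at hteq
    have h2 : (t + d) % d = j := by rw [hteq]; exact hm.2
    have htm : t % d = j := by rwa [Nat.add_mod_right] at h2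
    exact Nat.find_min hex (show t < m by omega) ⟨ht, htm⟩
  have himg : (· % d) '' D = Set.Iio d := by
    refine subset_antisymm ?_ hsurj
    rintro _ ⟨s, _, rfl⟩
    exact Nat.mod_lt _ hd
  calc D.ncard = ((· % d) '' D).ncard := (Set.ncard_image_of_injOn hinj).symm
    _ = (Set.Iio d).ncard := by rw [himg]
    _ = d := by rw [show (Set.Iio d) = ↑(Finset.Iio d) from (Finset.coe_Iio d).symm,
        Set.ncard_coe_finset, Nat.card_Iio]


lemma Sn_anti {a : Fin r → ℕ} {m n : ℕ} (h : m ≤ n) : Sn a n ⊆ Sn a m := by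
  intro s hs
  rcases mem_Sn_iff.mp hs with rfl | ⟨α, hα, rfl⟩
  · exact zero_mem
  · exact Or.inr ⟨α, le_trans h hα, rfl⟩

end SnAux

theorem stmt_15 (r : ℕ) (a : Fin (r + 2) → ℕ)
    (ha : StrictMono a) (h1 : 1 < a 0)
    (hgcd : Finset.univ.gcd a = 1)
    (hmin : ∀ i, a i ∉ AddSubmonoid.closure (a '' {i}ᶜ))
    (F : ℕ) (hF : IsGreatest {m : ℕ | m ∉ Sn a 1} F)
    (hF1 : a 0 < F) (hF2 : F < a 1) :
    (∀ n : ℕ, 1 ≤ n → ∃ Fn : ℕ,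
      IsGreatest {m : ℕ | m ∉ Sn a n} Fn ∧ Fn < n * a 1 ∧
      IsGreatest {m : ℕ | m ∉ Sn a (n + 1)} (Fn + a 0)) ∧
    (∀ n : ℕ, 1 ≤ n →
      Sn a (n + 1) \ {0} = (fun s => s + a 0) '' (Sn a n \ {0})) ∧
    (∀ n : ℕ, 1 ≤ n → (Sn a n \ Sn a (n + 1)).ncard = a 0) ∧
    IsLeast {k : ℕ | ∀ n : ℕ, k ≤ n →
      (Sn a n \ Sn a (n + 1)).ncard = a 0} 1 := by
  have ha01 : a 0 < a 1 := ha (by rw [Fin.lt_def, Fin.val_one]; simp)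
  have habove := SnAux.above (a := a) h1 hF1 (fun m hm => hF.2 hm)
  have hnotmem := SnAux.notmem h1 ha hF1 hF2 hF.1
  have part1 : ∀ n : ℕ, 1 ≤ n → ∃ Fn : ℕ,
      IsGreatest {m : ℕ | m ∉ Sn a n} Fn ∧ Fn < n * a 1 ∧
      IsGreatest {m : ℕ | m ∉ Sn a (n + 1)} (Fn + a 0) := by
    intro n hn
    obtain ⟨k, rfl⟩ : ∃ k, n = k + 1 := ⟨n - 1, by omega⟩
    refine ⟨F + k * a 0, ⟨hnotmem k, fun m hm => ?_⟩, by nlinarith, ?_, fun m hm => ?_⟩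
    · by_contra h
      push_neg at h
      exact hm (habove k m h)
    · have he : F + k * a 0 + a 0 = F + (k+1) * a 0 := by ring
      rw [he]
      exact hnotmem (k+1)
    · by_contra h
      push_neg at h
      have hexp : (k+1) * a 0 = k * a 0 + a 0 := by ring
      exact hm (habove (k+1) m (by omega))
  have part2 : ∀ n : ℕ, 1 ≤ n →
      Sn a (n + 1) \ {0} = (fun s => s + a 0) '' (Sn a n \ {0}) := by
    intro n hn
    obtain ⟨k, rfl⟩ : ∃ k, n = k + 1 := ⟨n - 1, by omega⟩
    ext s
    simp only [Set.mem_diff, Set.mem_singleton_iff, Set.mem_image]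
    constructor
    · rintro ⟨hs, hs0⟩
      rcases SnAux.decompose h1 ha hs hs0 with ⟨t, ht, heq, htne⟩ | hge
      · exact ⟨t, ⟨ht, htne (by omega)⟩, heq.symm⟩
      · have hmul : (k+1) * a 0 ≤ (k+1) * a 1 := Nat.mul_le_mul_left _ ha01.le
        have h2 : a 1 * (k+1+1) = (k+1) * a 1 + a 1 := by ring
        have hs1 : F + (k+1) * a 0 < s := by omega
        have hexp : (k+1) * a 0 = k * a 0 + a 0 := by ring
        refine ⟨s - a 0, ⟨habove k _ (by omega), by omega⟩, by omega⟩
    · rintro ⟨t, ⟨ht, ht0⟩, rfl⟩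
      exact ⟨SnAux.step_mem ht ht0, by omega⟩
  have part3 : ∀ n : ℕ, 1 ≤ n → (Sn a n \ Sn a (n + 1)).ncard = a 0 := by
    intro n hn
    obtain ⟨k, rfl⟩ : ∃ k, n = k + 1 := ⟨n - 1, by omega⟩
    set T := Sn a (k+1) \ {0} with hT
    have himg := part2 (k+1) (by omega)
    have hdecomp : Sn a (k+1) \ Sn a (k+1+1) = T \ ((· + a 0) '' T) := by
      ext s
      simp only [Set.mem_diff, hT, Set.mem_singleton_iff]
      constructor
      · rintro ⟨hs, hns⟩
        have hs0 : s ≠ 0 := fun h => hns (h ▸ SnAux.zero_mem)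
        refine ⟨⟨hs, hs0⟩, fun himg' => hns ?_⟩
        have hmem : s ∈ Sn a (k+1+1) \ {0} := by
          rw [himg]
          exact himg'
        exact hmem.1
      · rintro ⟨⟨hs, hs0⟩, hnimg⟩
        refine ⟨hs, fun hmem => hnimg ?_⟩
        have : s ∈ Sn a (k+1+1) \ {0} := ⟨hmem, hs0⟩
        rw [himg] at this
        exact this
    rw [hdecomp]
    refine SnAux.apery_ncard (B := F + k * a 0) (by omega) ?_ ?_
    · rintro t ⟨ht, ht0⟩
      have ht0' : t ≠ 0 := ht0
      exact ⟨SnAux.Sn_anti (by omega) (SnAux.step_mem ht ht0'), by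
        simp only [Set.mem_singleton_iff]; omega⟩
    · intro m hm
      exact ⟨habove k m hm, by simp only [Set.mem_singleton_iff]; omega⟩
  refine ⟨part1, part2, part3, fun n hn => part3 n hn, ?_⟩
  intro k hk
  by_contra h
  push_neg at h
  interval_cases k
  have h0 := hk 0 (le_refl 0)
  have hsub : Sn a 0 ⊆ Sn a 1 := by
    intro s hs
    rcases SnAux.mem_Sn_iff.mp hs with rfl | ⟨α, _, rfl⟩
    · exact SnAux.zero_mem
    · rcases Nat.eq_zero_or_pos (∑ i, α i) with hz | hp
      · have hall := Finset.sum_eq_zero_iff.mp hz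
        have : ∑ i, a i * α i = 0 :=
          Finset.sum_eq_zero fun i hi => by rw [hall i hi, mul_zero]
        exact Or.inl this
      · exact Or.inr ⟨α, hp, rfl⟩
  rw [Set.diff_eq_empty.mpr hsub] at h0
  simp at h0
  omega
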